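/- arXiv:0809.0835 — 6 statements merged into one kernel-verified Lean document; each statement's English description precedes it below -/
import Mathlib

section
/- Let d ≥ 1, and for each k in a finite index set let C_k ⊆ {1,…,d}. Define the box A_k = ∏_{i=1}^d [0, q_i^{(k)}] ⊆ ℝ^d where q_i^{(k)} = 1 if i ∈ C_k and q_i^{(k)} = 2 otherwise. For x ∈ {0,1}^d let U_x = ∏_{i=1}^d [x_i, x_i + 1]. Then U_x ⊆ ⋃_k A_k if and only if there exists a k such that x_i = 0 for all i ∈ C_k (i.e., x satisfies the monotone DNF ⋁_k ⋀_{i∈C_k} ¬x_i). -/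
open Set

theorem stmt0 (d n : ℕ) (hd : 1 ≤ d) (C : Fin n → Finset (Fin d))
    (x : Fin d → Bool) :
    (Set.univ.pi (fun i : Fin d =>
        Set.Icc ((if x i then 1 else 0) : ℝ) ((if x i then 1 else 0) + 1)))
      ⊆ ⋃ k : Fin n, Set.univ.pi (fun i : Fin d =>
        Set.Icc (0 : ℝ) (if i ∈ C k then 1 else 2))
    ↔ ∃ k : Fin n, ∀ i ∈ C k, x i = false := by
  constructor
  · intro h
    have hp : (fun i : Fin d => ((if x i then 1 else 0) : ℝ) + 1) ∈
        Set.univ.pi (fun i : Fin d =>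
          Set.Icc ((if x i then 1 else 0) : ℝ) ((if x i then 1 else 0) + 1)) := by
      intro i _
      exact ⟨by by_cases hx : x i <;> simp [hx], le_refl _⟩
    rcases Set.mem_iUnion.1 (h hp) with ⟨k, hk⟩
    refine ⟨k, fun i hi => ?_⟩
    have := (hk i (Set.mem_univ i)).2
    simp only [hi, if_true] at this
    by_contra hx
    simp only [ne_eq, Bool.not_eq_false] at hx
    simp [hx] at this
    linarith
  · rintro ⟨k, hk⟩ y hy
    refine Set.mem_iUnion.2 ⟨k, fun i _ => ?_⟩
    have h1 := (hy i (Set.mem_univ i)).1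
    have h2 := (hy i (Set.mem_univ i)).2
    constructor
    · by_cases hx : x i <;> simp [hx] at h1 <;> linarith
    · by_cases hi : i ∈ C k
      · have := hk i hi
        simp [this, hi] at h2 ⊢
        linarith
      · by_cases hx : x i <;> simp [hx, hi] at h2 ⊢ <;> linarith
end

section
/- With the setup of the reduction from #MON-CNF to Klee's measure problem (boxes A_k = ∏_{i=1}^d [0, q_i^{(k)}] with q_i^{(k)} = 1 if i ∈ C_k and 2 otherwise), the Lebesgue measure of ⋃_{k=1}^n A_k equals the number of points x ∈ {0,1}^d such that for some k, x_i = 0 for all i ∈ C_k. -/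
open Set MeasureTheory

theorem stmt1 (d n : ℕ) (hd : 1 ≤ d) (hn : 1 ≤ n)
    (C : Fin n → Finset (Fin d)) (hC : ∀ k, (C k).Nonempty) :
    volume (⋃ k : Fin n, Set.univ.pi (fun i : Fin d =>
        Set.Icc (0 : ℝ) (if i ∈ C k then 1 else 2)))
      = Nat.card {x : Fin d → Bool | ∃ k : Fin n, ∀ i ∈ C k, x i = false} := by
  classical
  set cube : (Fin d → Bool) → Set (Fin d → ℝ) := fun x =>
    Set.univ.pi (fun i => Set.Icc (if x i then (1:ℝ) else 0) ((if x i then (1:ℝ) else 0) + 1))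
    with hcube_def
  set S : Finset (Fin d → Bool) :=
    Finset.univ.filter (fun x => ∃ k : Fin n, ∀ i ∈ C k, x i = false) with hS
  have hset : (⋃ k : Fin n, Set.univ.pi (fun i : Fin d =>
        Set.Icc (0 : ℝ) (if i ∈ C k then 1 else 2))) = ⋃ x ∈ S, cube x := by
    ext y
    simp only [mem_iUnion, mem_pi, mem_univ, forall_true_left, mem_Icc, hS,
      Finset.mem_filter, Finset.mem_univ, true_and, hcube_def, exists_prop]
    constructor
    · rintro ⟨k, hk⟩
      refine ⟨fun i => decide (1 < y i), ⟨k, fun i hi => ?_⟩, fun i => ?_⟩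
      · have := (hk i).2
        simp only [if_pos hi] at this
        simpa using not_lt.mpr this
      · by_cases h1 : 1 < y i
        · simp [h1]
          refine ⟨le_of_lt h1, ?_⟩
          have := (hk i).2
          split_ifs at this with h
          · linarith
          · linarith
        · simp [h1]
          exact ⟨(hk i).1, by push_neg at h1; linarith⟩
    · rintro ⟨x, ⟨k, hk⟩, hx⟩
      refine ⟨k, fun i => ?_⟩
      have h := hx i
      constructor
      · have : (0:ℝ) ≤ (if x i then (1:ℝ) else 0) := by split_ifs <;> norm_num
        linarith [h.1]
      · split_ifs with hi
        · have := hk i hi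
          simp only [this, if_neg Bool.false_ne_true] at h
          simpa using h.2
        · have : (if x i then (1:ℝ) else 0) + 1 ≤ 2 := by split_ifs <;> norm_num
          linarith [h.2]
  have hvol : ∀ x : Fin d → Bool, volume (cube x) = 1 := by
    intro x
    rw [hcube_def]
    rw [volume_pi_pi]
    simp [Real.volume_Icc]
  have hmeas : ∀ x : Fin d → Bool, MeasurableSet (cube x) := by
    intro x
    exact MeasurableSet.univ_pi (fun i => measurableSet_Icc)
  have hdisj : (↑S : Set (Fin d → Bool)).Pairwise (Function.onFun (AEDisjoint volume) cube) := by
    intro x _ y _ hxy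
    obtain ⟨i, hi⟩ : ∃ i, x i ≠ y i := by
      by_contra h
      push_neg at h
      exact hxy (funext h)
    unfold Function.onFun AEDisjoint
    rw [hcube_def]
    have : (Set.univ.pi fun i => Set.Icc (if x i then (1:ℝ) else 0) ((if x i then (1:ℝ) else 0) + 1)) ∩
        (Set.univ.pi fun i => Set.Icc (if y i then (1:ℝ) else 0) ((if y i then (1:ℝ) else 0) + 1))
        = Set.univ.pi fun i => (Set.Icc (if x i then (1:ℝ) else 0) ((if x i then (1:ℝ) else 0) + 1) ∩
            Set.Icc (if y i then (1:ℝ) else 0) ((if y i then (1:ℝ) else 0) + 1)) := by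
      rw [← Set.pi_inter_distrib]
    rw [this, volume_pi_pi]
    apply Finset.prod_eq_zero (Finset.mem_univ i)
    rcases Bool.eq_false_or_eq_true (x i) with hx | hx <;>
      rcases Bool.eq_false_or_eq_true (y i) with hy | hy <;>
      simp_all [Set.Icc_inter_Icc, Real.volume_Icc] <;> norm_num
  rw [hset, measure_biUnion_finset₀ hdisj (fun x _ => (hmeas x).nullMeasurableSet)]
  simp only [hvol, Finset.sum_const, smul_eq_mul, mul_one]
  have : Nat.card {x : Fin d → Bool | ∃ k : Fin n, ∀ i ∈ C k, x i = false} = S.card := by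
    rw [Nat.card_eq_fintype_card]
    rw [hS]
    simp [Fintype.card_subtype]
  rw [this]
  simp
end

section
/- Let d ≥ 1 and for k = 1,…,n let p_k ∈ [0,1]^d be defined by p_i^{(k)} = 1/2 if i ∈ C_k and p_i^{(k)} = 1 otherwise, where C_k ⊆ {1,…,d}. Define B_{p_k} = ∏_{i=1}^d [0, p_i^{(k)}] and the co-box co-B_{p_k} = [0,1]^d \ B_{p_k}. For x ∈ {0,1}^d let U_x = ∏_{i=1}^d [x_i/2, (x_i+1)/2]. Then (up to a set of measure zero) U_x ⊆ ⋂_{k=1}^n co-B_{p_k} if and only if x satisfies the monotone CNF formula ⋀_{k=1}^n ⋁_{i∈C_k} x_i, i.e., for every k there is i ∈ C_k with x_i = 1. -/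
open Set

theorem stmt2 (d n : ℕ) (hd : 1 ≤ d) (C : Fin n → Finset (Fin d))
    (x : Fin d → Bool) :
    interior (Set.univ.pi (fun i : Fin d =>
        Set.Icc (((if x i then 1 else 0) : ℝ) / 2) (((if x i then 1 else 0) + 1) / 2)))
      ⊆ ⋂ k : Fin n,
          (Set.univ.pi (fun _ : Fin d => Set.Icc (0 : ℝ) 1) \
           Set.univ.pi (fun i : Fin d =>
             Set.Icc (0 : ℝ) (if i ∈ C k then 1/2 else 1)))
    ↔ ∀ k : Fin n, ∃ i ∈ C k, x i = true := by
  have hint : interior (Set.univ.pi (fun i : Fin d =>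
      Set.Icc (((if x i then 1 else 0) : ℝ) / 2) (((if x i then 1 else 0) + 1) / 2)))
      = Set.univ.pi (fun i : Fin d =>
      Set.Ioo (((if x i then 1 else 0) : ℝ) / 2) (((if x i then 1 else 0) + 1) / 2)) := by
    rw [interior_pi_set finite_univ]
    simp [Function.comp]
  rw [hint]
  constructor
  · intro h k
    by_contra hc
    push_neg at hc
    set y : Fin d → ℝ := fun i => ((if x i then 1 else 0) : ℝ) / 2 + 1/4 with hy
    have hmem : y ∈ Set.univ.pi (fun i : Fin d =>
        Set.Ioo (((if x i then 1 else 0) : ℝ) / 2) (((if x i then 1 else 0) + 1) / 2)) := by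
      intro i _
      by_cases hxi : x i <;> simp [hy, hxi] <;> norm_num
    have h2 := h hmem
    rw [Set.mem_iInter] at h2
    apply (h2 k).2
    intro i _
    refine ⟨?_, ?_⟩
    · by_cases hxi : x i <;> simp [hy, hxi] <;> norm_num
    · by_cases hik : i ∈ C k
      · have hxf : x i = false := by
          cases hxi : x i
          · rfl
          · exact absurd hxi (hc i hik)
        simp [hy, hxf, hik]
        norm_num
      · by_cases hxi : x i <;> simp [hy, hxi, hik] <;> norm_num
  · intro h y hy
    rw [Set.mem_iInter]
    intro k
    constructor
    · intro i _
      have h1 := hy i (mem_univ i)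
      by_cases hxi : x i <;> simp [hxi] at h1 ⊢ <;>
        exact ⟨by linarith [h1.1], by linarith [h1.2]⟩
    · intro hB
      obtain ⟨i, hiC, hxi⟩ := h k
      have h1 := hy i (mem_univ i)
      have h2 := hB i (mem_univ i)
      simp [hxi, hiC] at h1 h2
      linarith [h1.1, h2.2]
end

section
/- With the co-box construction of the previous statement, 2^d times the Lebesgue measure of ⋂_{k=1}^n co-B_{p_k} equals the number of satisfying assignments of the monotone CNF formula ⋀_{k=1}^n ⋁_{i∈C_k} x_i over {0,1}^d. -/
open Set MeasureTheory
set_option maxHeartbeats 1000000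

theorem stmt3 (d n : ℕ) (hd : 1 ≤ d) (hn : 1 ≤ n)
    (C : Fin n → Finset (Fin d)) (hC : ∀ k, (C k).Nonempty) :
    2 ^ d * volume (⋂ k : Fin n,
        (Set.univ.pi (fun _ : Fin d => Set.Icc (0 : ℝ) 1) \
         Set.univ.pi (fun i : Fin d =>
           Set.Icc (0 : ℝ) (if i ∈ C k then 1/2 else 1))))
      = Nat.card {x : Fin d → Bool | ∀ k : Fin n, ∃ i ∈ C k, x i = true} := by
  classical
  set T : (Fin d → Bool) → Set (Fin d → ℝ) := fun x =>
    Set.univ.pi (fun i => if x i then Set.Ioc (1/2 : ℝ) 1 else Set.Icc 0 (1/2)) with hT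
  set satF : Finset (Fin d → Bool) :=
    Finset.univ.filter (fun x => ∀ k : Fin n, ∃ i ∈ C k, x i = true) with hsat
  have hSeq : (⋂ k : Fin n,
        (Set.univ.pi (fun _ : Fin d => Set.Icc (0 : ℝ) 1) \
         Set.univ.pi (fun i : Fin d =>
           Set.Icc (0 : ℝ) (if i ∈ C k then 1/2 else 1))))
      = ⋃ x ∈ satF, T x := by
    ext y
    simp only [Set.mem_iInter, Set.mem_diff, Set.mem_pi, Set.mem_univ, true_implies,
      Set.mem_iUnion, hT, hsat, Finset.mem_filter, Finset.mem_univ, true_and]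
    constructor
    · intro h
      have k0 : Fin n := ⟨0, hn⟩
      have hy01 : ∀ i, y i ∈ Set.Icc (0:ℝ) 1 := (h k0).1
      refine ⟨fun i => decide (1/2 < y i), ?_, ?_⟩
      · intro k
        obtain ⟨i, hi⟩ := not_forall.mp (h k).2
        have hi' : ¬ y i ∈ Set.Icc (0:ℝ) (if i ∈ C k then 1/2 else 1) := hi
        by_cases hic : i ∈ C k
        · refine ⟨i, hic, ?_⟩
          simp only [hic, if_true, Set.mem_Icc, not_and, not_le] at hi'
          exact decide_eq_true (hi' (hy01 i).1)
        · exact absurd (by simpa [hic] using hy01 i) hi'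
      · intro i
        simp only [decide_eq_true_eq]
        by_cases h2 : 1/2 < y i
        · rw [if_pos h2]
          exact ⟨h2, (hy01 i).2⟩
        · rw [if_neg h2]
          exact ⟨(hy01 i).1, le_of_not_gt h2⟩
    · rintro ⟨x, hx, hyx⟩ k
      constructor
      · intro i
        have := hyx i
        by_cases hxi : x i
        · simp only [hxi, if_true, Set.mem_Ioc] at this
          exact ⟨le_trans (by norm_num) this.1.le, this.2⟩
        · simp only [hxi, if_false, Set.mem_Icc] at this
          exact ⟨this.1, by linarith [this.2]⟩
      · intro hmem
        obtain ⟨i, hic, hxi⟩ := hx k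
        have h1 := hmem i
        have h2 := hyx i
        simp only [hic, if_true, Set.mem_Icc] at h1
        simp only [hxi, if_true, Set.mem_Ioc] at h2
        linarith [h1.2, h2.1]
  rw [hSeq]
  have hmeas : ∀ x, MeasurableSet (T x) := fun x =>
    MeasurableSet.univ_pi (fun i => by by_cases h : x i <;> simp [hT, h, measurableSet_Ioc, measurableSet_Icc])
  have hdisj : (satF : Set (Fin d → Bool)).PairwiseDisjoint T := by
    intro a _ b _ hab
    obtain ⟨i, hi⟩ := Function.ne_iff.mp hab
    refine Set.disjoint_left.mpr fun y hya hyb => ?_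
    have h1 := hya i (Set.mem_univ i)
    have h2 := hyb i (Set.mem_univ i)
    rcases Bool.eq_false_or_eq_true (a i) with h | h <;>
      rcases Bool.eq_false_or_eq_true (b i) with h' | h' <;>
      simp_all [Set.mem_Ioc, Set.mem_Icc] <;> linarith
  rw [measure_biUnion_finset hdisj (fun x _ => hmeas x)]
  have hvol : ∀ x, volume (T x) = (ENNReal.ofReal (1/2)) ^ d := by
    intro x
    rw [hT]
    rw [volume_pi_pi]
    have : ∀ i : Fin d, volume (if x i then Set.Ioc (1/2:ℝ) 1 else Set.Icc 0 (1/2))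
        = ENNReal.ofReal (1/2) := by
      intro i
      by_cases h : x i <;> simp [h, Real.volume_Ioc, Real.volume_Icc] <;> norm_num <;>
        rw [one_div, ENNReal.ofReal_inv_of_pos (by norm_num), ENNReal.ofReal_ofNat]
    rw [Finset.prod_congr rfl (fun i _ => this i), Finset.prod_const]
    simp
  simp only [hvol, Finset.sum_const, nsmul_eq_mul]
  have hcard : Nat.card {x : Fin d → Bool | ∀ k : Fin n, ∃ i ∈ C k, x i = true} = satF.card := by
    rw [Nat.card_eq_fintype_card]
    rw [hsat]
    simp [Fintype.card_subtype]
  rw [hcard]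
  have h2 : (2:ENNReal) ^ d * ((satF.card : ENNReal) * ENNReal.ofReal (1/2) ^ d)
      = (satF.card : ENNReal) * ((2:ENNReal) * ENNReal.ofReal (1/2)) ^ d := by
    ring
  rw [h2]
  have : (2:ENNReal) * ENNReal.ofReal (1/2) = 1 := by
    rw [show ((2:ENNReal)) = ENNReal.ofReal 2 by simp]
    rw [← ENNReal.ofReal_mul (by norm_num)]
    norm_num
  rw [this]
  simp
end

section
/- Let n ≥ 1 be an integer and 0 < ε < 1. Set ε_V = ε_S = ε²/(47n), ε_P = ε²/(47n²), C̃ = (1+ε_S)(1+ε_V)(1+n·ε_P) / ((1−ε_V)(1−ε_P)), and ε̃ = (ε − ε_V)/(1 + ε_V). Then ε > ε_V + 2(1+ε_V)·√(2(C̃ − 1)n), and moreover T := 24·ln(2)·(1+ε̃)·n / (ε̃² − 8(C̃ − 1)n) satisfies 0 < T ≤ 2365·n/ε². -/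
set_option maxHeartbeats 2000000 in
theorem stmt12 (n : ℕ) (hn : 1 ≤ n) (ε : ℝ) (hε0 : 0 < ε) (hε1 : ε < 1) :
    (letI εV : ℝ := ε^2 / (47 * n)
     letI εS : ℝ := ε^2 / (47 * n)
     letI εP : ℝ := ε^2 / (47 * n^2)
     letI C : ℝ := (1 + εS) * (1 + εV) * (1 + n * εP) / ((1 - εV) * (1 - εP))
     letI ε' : ℝ := (ε - εV) / (1 + εV)
     ε > εV + 2 * (1 + εV) * Real.sqrt (2 * (C - 1) * n) ∧
     0 < 24 * Real.log 2 * (1 + ε') * n / (ε'^2 - 8 * (C - 1) * n) ∧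
     24 * Real.log 2 * (1 + ε') * n / (ε'^2 - 8 * (C - 1) * n) ≤ 2365 * n / ε^2) := by
  have hx1 : (1:ℝ) ≤ (n:ℝ) := by exact_mod_cast hn
  set x : ℝ := (n:ℝ) with hxdef
  have hx0 : (0:ℝ) < x := by linarith
  set A : ℝ := ε^2 / (47 * x) with hAdef
  set B : ℝ := ε^2 / (47 * x^2) with hBdef
  clear_value B A x
  have he0 : 0 < ε^2 := by positivity
  have he1 : ε^2 ≤ 1 := by nlinarith
  have hA0 : 0 < A := by rw [hAdef]; positivity
  have hB0 : 0 < B := by rw [hBdef]; positivity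
  have hAx : A * x = ε^2 / 47 := by rw [hAdef]; field_simp
  have hBx : B * x = A := by rw [hAdef, hBdef]; field_simp
  have hBA : B ≤ A := by
    rw [hAdef, hBdef]
    apply div_le_div_of_nonneg_left (le_of_lt he0) (by positivity)
    nlinarith
  have hA47 : A ≤ ε^2 / 47 := by
    rw [hAdef]
    apply div_le_div_of_nonneg_left (le_of_lt he0) (by norm_num) -- 47 ≤ 47x
    nlinarith
  have hAs : A ≤ 1/47 := by nlinarith
  have hAe : A ≤ ε/47 := by nlinarith
  have h1A : (0:ℝ) < 1 - A := by nlinarith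
  have h1B : (0:ℝ) < 1 - B := by nlinarith
  have hxB : x * B = A := by rw [mul_comm]; exact hBx
  have hD0 : (0:ℝ) < (1 - A) * (1 - B) := mul_pos h1A h1B
  set N : ℝ := (1+A)*(1+A)*(1+A) - (1-A)*(1-B) with hNdef
  clear_value N
  have hC : (1 + A) * (1 + A) * (1 + x * B) / ((1 - A) * (1 - B)) - 1
      = N / ((1 - A) * (1 - B)) := by
    rw [hxB, div_sub_one (ne_of_gt hD0), ← hNdef]
  have hNx : N * x = 4*(ε^2/47) + A + 3*A*(ε^2/47) + A^2*(ε^2/47) - A^2 := by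
    rw [hNdef]
    linear_combination (4 + 3*A + A^2) * hAx + (1 - A) * hBx
  have hKey : 8 * (N / ((1-A)*(1-B))) * x ≤ 901/1000 * ε^2 := by
    have hrw : 8 * (N / ((1-A)*(1-B))) * x = 8 * (N * x) / ((1-A)*(1-B)) := by ring
    rw [hrw, div_le_iff₀ hD0, hNx]
    nlinarith [mul_le_mul_of_nonneg_left hA47 he0.le,
      mul_le_mul_of_nonneg_left (hBA.trans hA47) he0.le,
      mul_nonneg (sq_nonneg A) (by linarith : (0:ℝ) ≤ 1 - ε^2/47),
      mul_nonneg he0.le (by linarith : (0:ℝ) ≤ 1 - ε^2),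
      mul_nonneg (mul_nonneg hA0.le hB0.le) he0.le, hA47, hBA]
  have hs : Real.sqrt (2 * ((1 + A) * (1 + A) * (1 + x * B) / ((1 - A) * (1 - B)) - 1) * x)
      ≤ 19/40 * ε := by
    rw [hC]
    have h2 : 2 * (N / ((1-A)*(1-B))) * x ≤ (19/40 * ε)^2 := by nlinarith
    calc Real.sqrt (2 * (N / ((1-A)*(1-B))) * x) ≤ Real.sqrt ((19/40 * ε)^2) :=
          Real.sqrt_le_sqrt h2
      _ = 19/40 * ε := Real.sqrt_sq (by positivity)
  have h1A' : (0:ℝ) < 1 + A := by linarith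
  set P : ℝ := (ε - A) / (1 + A) with hPdef
  have hAltε : A < ε := by nlinarith
  have hP0 : 0 < P := div_pos (by linarith) h1A'
  have hPle : P ≤ ε := by
    rw [hPdef, div_le_iff₀ h1A']
    nlinarith
  have hPlb : 23/24 * ε ≤ P := by
    rw [hPdef, le_div_iff₀ h1A']
    nlinarith [mul_nonneg (sub_nonneg.2 hε1.le) hA0.le]
  have hden : 10024/576000 * ε^2 ≤ P^2 - 8 * (N / ((1-A)*(1-B))) * x := by
    nlinarith [mul_le_mul hPlb hPlb (by positivity : (0:ℝ) ≤ 23/24*ε) hP0.le]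
  have hdpos : 0 < P^2 - 8 * ((1 + A) * (1 + A) * (1 + x * B) / ((1 - A) * (1 - B)) - 1) * x := by
    rw [hC]; nlinarith
  refine ⟨?_, ?_, ?_⟩
  · nlinarith [Real.sqrt_nonneg (2 * ((1 + A) * (1 + A) * (1 + x * B) / ((1 - A) * (1 - B)) - 1) * x),
      hs, mul_nonneg hA0.le
        (Real.sqrt_nonneg (2 * ((1 + A) * (1 + A) * (1 + x * B) / ((1 - A) * (1 - B)) - 1) * x)),
      mul_nonneg (sub_nonneg.2 hAs)
        (Real.sqrt_nonneg (2 * ((1 + A) * (1 + A) * (1 + x * B) / ((1 - A) * (1 - B)) - 1) * x))]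
  · apply div_pos _ hdpos
    have hl2 : 0 < Real.log 2 := Real.log_pos (by norm_num)
    positivity
  · rw [div_le_div_iff₀ hdpos he0, hC]
    have h1 : 24 * Real.log 2 * (1 + P) ≤ 34 := by
      nlinarith [Real.log_two_lt_d9, Real.log_pos (show (1:ℝ) < 2 by norm_num)]
    have h2 : 34 * ε^2 ≤ 2365 * (P^2 - 8 * (N / ((1-A)*(1-B))) * x) := by nlinarith
    nlinarith [mul_le_mul_of_nonneg_right h1 (mul_pos hx0 he0).le,
      mul_le_mul_of_nonneg_left h2 hx0.le]
end

section
/- Let k ∈ {1,…,n} and let t be geometric with success probability k/n (supported on {1,2,…}). Then for all 0 ≤ λ ≤ 1/2, E[e^{−λ t / n}] ≤ e^{−(λ − λ²)/k}. -/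
set_option maxHeartbeats 1000000 in
/-- Lower-tail moment bound for the geometric variable `t` on `{1,2,…}` with
success probability `k/n`: `E[exp(-λ t/n)] ≤ exp(-(λ - λ²)/k)`. -/
theorem stmt15 (n k : ℕ) (hk : 1 ≤ k) (hkn : k ≤ n) (lam : ℝ)
    (hl0 : 0 ≤ lam) (hl1 : lam ≤ 1/2) :
    (∑' j : ℕ, Real.exp (-(lam * (j + 1) / n)) * (1 - (k : ℝ)/n)^j * ((k : ℝ)/n))
      ≤ Real.exp (-((lam - lam^2) / k)) := by
  have hn : 1 ≤ n := le_trans hk hkn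
  have hn0 : (0:ℝ) < n := by exact_mod_cast Nat.pos_of_ne_zero (by omega)
  have hk0 : (0:ℝ) < k := by exact_mod_cast hk
  set p : ℝ := (k:ℝ)/n with hp_def
  have hp0 : 0 < p := div_pos hk0 hn0
  have hp1 : p ≤ 1 := by
    rw [hp_def, div_le_one hn0]; exact_mod_cast hkn
  set r : ℝ := Real.exp (-(lam/n)) with hr_def
  have hr0 : 0 < r := Real.exp_pos _
  have hr1 : r ≤ 1 := Real.exp_le_one_iff.mpr (by
    have h0 : 0 ≤ lam/n := div_nonneg hl0 hn0.le
    linarith)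
  set c : ℝ := (1 - p) * r with hc_def
  have hc0 : 0 ≤ c := mul_nonneg (by linarith) hr0.le
  have hc1 : c < 1 := by
    calc c ≤ (1 - p) * 1 := mul_le_mul_of_nonneg_left hr1 (by linarith)
      _ < 1 := by linarith
  -- rewrite the sum as geometric
  have hterm : ∀ j : ℕ, Real.exp (-(lam * (j + 1) / n)) * (1 - p)^j * p
      = (r * p) * c^j := by
    intro j
    have h1 : (-(lam * ((j:ℝ) + 1) / n)) = ((j:ℕ)+1 : ℕ) * (-(lam/n)) := by
      push_cast; ring
    rw [h1, Real.exp_nat_mul, ← hr_def, hc_def, mul_pow, pow_succ]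
    ring
  have hsum : (∑' j : ℕ, Real.exp (-(lam * (j + 1) / n)) * (1 - p)^j * p)
      = (r * p) * (1 - c)⁻¹ := by
    rw [tsum_congr hterm, tsum_mul_left, tsum_geometric_of_lt_one hc0 hc1]
  rw [hsum]
  set u : ℝ := lam / k with hu_def
  have hu0 : 0 ≤ u := div_nonneg hl0 hk0.le
  have hul : u ≤ lam := by
    rw [hu_def, div_le_iff₀ hk0]
    nlinarith [hl0, (by exact_mod_cast hk : (1:ℝ) ≤ k)]
  have hpu : p * u = lam / n := by
    rw [hp_def, hu_def]; field_simp
  have hkey : r * (1 + lam/n) ≤ 1 := by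
    have h := Real.add_one_le_exp (lam/n)
    rw [hr_def, Real.exp_neg, inv_mul_le_iff₀ (Real.exp_pos _)]
    linarith
  -- Step A: (r*p)*(1-c)⁻¹ ≤ (1+u)⁻¹
  have hA : (r * p) * (1 - c)⁻¹ ≤ (1 + u)⁻¹ := by
    rw [← div_eq_mul_inv, inv_eq_one_div,
      div_le_div_iff₀ (by linarith) (by linarith), one_mul]
    have hexp : r * p * u = r * (lam/n) := by rw [mul_assoc, hpu]
    have : r * (lam/n) ≤ 1 - r := by nlinarith [hkey]
    rw [hc_def]
    nlinarith [this, hr0.le, hp0.le]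
  -- Step B: (1+u)⁻¹ ≤ exp(-((lam-lam^2)/k))
  have hB : (1 + u)⁻¹ ≤ Real.exp (-((lam - lam^2) / k)) := by
    have hz : (lam - lam^2)/k = u - lam * u := by
      rw [hu_def]; field_simp
    have h1 : (u^2 - u) + 1 ≤ Real.exp (u^2 - u) := Real.add_one_le_exp _
    have h2 : Real.exp (u - u^2) * Real.exp (u^2 - u) = 1 := by
      rw [← Real.exp_add]; ring_nf; exact Real.exp_zero
    have hF1 : 1 ≤ (1 + u) * Real.exp (u^2 - u) := by
      nlinarith [h1, hu0, mul_nonneg (mul_nonneg hu0 hu0) hu0]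
    have h3 : Real.exp (u - u^2) ≤ 1 + u := by
      refine le_of_mul_le_mul_right ?_ (Real.exp_pos (u^2 - u))
      rw [h2]; exact hF1
    have h4 : Real.exp ((lam - lam^2)/k) ≤ 1 + u := by
      refine le_trans (Real.exp_le_exp.mpr ?_) h3
      rw [hz]
      have : lam * u ≥ u * u := by nlinarith [hu0, hul]
      nlinarith [this]
    rw [Real.exp_neg]
    exact inv_anti₀ (Real.exp_pos _) h4
  exact le_trans hA hB
end
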